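/- Let I ⊆ ℝ be an interval, f : I → ℝ convex on I, x an interior point of I, and h > 0 such that x − h/2 and x + h/2 both lie in I. Then, with a = x − h/2 and b = x + h/2: 0 ≤ (1/8)·h²·[ f′₊(x) − f′₋(x) ] ≤ h·(f(a) + f(b))/2 − ∫_{x−h/2}^{x+h/2} f(t) dt. -/

import Mathlib

open MeasureTheory Set intervalIntegral

lemma integral_linear_aux (c d u v : ℝ) :
    ∫ t in u..v, (c + d * t) = c * (v - u) + d * (v ^ 2 - u ^ 2) / 2 := by
  rw [intervalIntegral.integral_add intervalIntegrable_const (intervalIntegrable_id.const_mul d),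
    intervalIntegral.integral_const_mul, integral_id, intervalIntegral.integral_const,
    smul_eq_mul]
  ring

set_option maxHeartbeats 1000000 in
/-- **Remark 1**: if `f : I → ℝ` is convex on an interval `I`, `x` is an interior
point of `I` and `h > 0` is such that `x − h/2, x + h/2 ∈ I`, then with
`a = x − h/2`, `b = x + h/2`:
`0 ≤ (1/8) h² [f′₊(x) − f′₋(x)] ≤ h (f(a)+f(b))/2 − ∫_{x−h/2}^{x+h/2} f`. -/
theorem trapezoid_convex_symmetric_interval
    (I : Set ℝ) (f : ℝ → ℝ) (hf : ConvexOn ℝ I f)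
    (x : ℝ) (hx : x ∈ interior I) (h : ℝ) (hh : 0 < h)
    (ha : x - h / 2 ∈ I) (hb : x + h / 2 ∈ I) (fdp fdm : ℝ)
    (hfdp : HasDerivWithinAt f fdp (Set.Ici x) x)
    (hfdm : HasDerivWithinAt f fdm (Set.Iic x) x) :
    0 ≤ (1 / 8) * h ^ 2 * (fdp - fdm) ∧
      (1 / 8) * h ^ 2 * (fdp - fdm) ≤
        (f (x - h / 2) + f (x + h / 2)) / 2 * h -
          ∫ t in (x - h / 2)..(x + h / 2), f t := by
  have hxI : x ∈ I := interior_subset hx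
  set a := x - h / 2 with ha_def
  set b := x + h / 2 with hb_def
  have hax : a < x := by rw [ha_def]; linarith
  have hxb : x < b := by rw [hb_def]; linarith
  have hab : a < b := hax.trans hxb
  have hIcc : Icc a b ⊆ I := hf.1.ordConnected.out ha hb
  have hfdm' : HasDerivWithinAt f fdm (Iio x) x := hfdm.mono Iio_subset_Iic_self
  have hfdp' : HasDerivWithinAt f fdp (Ioi x) x := hfdp.mono Ioi_subset_Ici_self
  -- limits of slopes
  have hm_lim : Filter.Tendsto (slope f x) (nhdsWithin x (Iio x)) (nhds fdm) := by
    have := hasDerivWithinAt_iff_tendsto_slope.mp hfdm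
    rwa [Iic_diff_right] at this
  have hp_lim : Filter.Tendsto (slope f x) (nhdsWithin x (Ioi x)) (nhds fdp) := by
    have := hasDerivWithinAt_iff_tendsto_slope.mp hfdp
    rwa [Ici_sdiff_left] at this
  -- fdm ≤ fdp
  have key1 : ∀ t, x < t → t ≤ b → fdm ≤ slope f x t := by
    intro t hxt htb
    have htI : t ∈ I := hIcc ⟨by linarith, htb⟩
    refine le_of_tendsto hm_lim ?_
    filter_upwards [Ioo_mem_nhdsLT_of_mem (⟨hax, le_refl x⟩ : x ∈ Ioc a x)] with s hs
    rw [slope_comm, slope_def_field, slope_def_field]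
    exact hf.slope_mono_adjacent (hIcc ⟨hs.1.le, by linarith [hs.2, hxb]⟩) htI hs.2 hxt
  have hmp : fdm ≤ fdp := by
    refine ge_of_tendsto hp_lim ?_
    filter_upwards [Ioo_mem_nhdsGT_of_mem (⟨le_refl x, hxb⟩ : x ∈ Ico x b)] with t ht
    exact key1 t ht.1 ht.2.le
  refine ⟨by nlinarith [mul_nonneg (sq_nonneg h) (sub_nonneg.mpr hmp)], ?_⟩
  -- support line bounds at a and b
  have hsb : fdp ≤ slope f x b := hf.le_slope_of_hasDerivWithinAt_Ioi hxI hb hxb hfdp'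
  have hsa : slope f a x ≤ fdm := hf.slope_le_of_hasDerivWithinAt_Iio ha hxI hax hfdm'
  rw [slope_def_field] at hsb hsa
  have hbx : b - x = h / 2 := by rw [hb_def]; ring
  have hxa : x - a = h / 2 := by rw [ha_def]; ring
  have hfb : f x + fdp * (h / 2) ≤ f b := by
    rw [hbx] at hsb
    have := (le_div_iff₀ (by linarith : (0:ℝ) < h / 2)).mp hsb
    linarith
  have hfa : f x - fdm * (h / 2) ≤ f a := by
    rw [hxa] at hsa
    have := (div_le_iff₀ (by linarith : (0:ℝ) < h / 2)).mp hsa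
    linarith
  -- chord bounds on [a,x] and [x,b]
  set k₁ := 2 * (f x - f a) / h with hk₁
  set k₂ := 2 * (f b - f x) / h with hk₂
  have chord : ∀ p q : ℝ, p < q → p ∈ I → q ∈ I →
      ∀ t ∈ Icc p q, f t ≤ (f p - (f q - f p) / (q - p) * p) + (f q - f p) / (q - p) * t := by
    intro p q hpq hpI hqI t ⟨h1, h2⟩
    have hw : (0:ℝ) < q - p := by linarith
    have hu : 0 ≤ (q - t) / (q - p) := div_nonneg (by linarith) hw.le
    have hv : 0 ≤ (t - p) / (q - p) := div_nonneg (by linarith) hw.le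
    have huv : (q - t) / (q - p) + (t - p) / (q - p) = 1 := by field_simp; ring
    have hc := hf.2 hpI hqI hu hv huv
    have harg : ((q - t) / (q - p)) • p + ((t - p) / (q - p)) • q = t := by
      simp only [smul_eq_mul]; field_simp; ring
    rw [harg, smul_eq_mul, smul_eq_mul] at hc
    refine hc.trans (le_of_eq ?_)
    field_simp
    ring
  have P1 : ∀ t ∈ Icc a x, f t ≤ (f a - k₁ * a) + k₁ * t := by
    intro t ht
    have := chord a x hax ha hxI t ht
    rw [hxa] at this
    refine this.trans (le_of_eq ?_)
    rw [hk₁]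
    field_simp
  have P2 : ∀ t ∈ Icc x b, f t ≤ (f x - k₂ * x) + k₂ * t := by
    intro t ht
    have := chord x b hxb hxI hb t ht
    rw [hbx] at this
    refine this.trans (le_of_eq ?_)
    rw [hk₂]
    field_simp
  -- integrability of f on [a,b]
  have hcont : ContinuousOn f (Ioo a b) := by
    have hsub : Ioo a b ⊆ interior I := by
      rw [← (isOpen_Ioo (a := a) (b := b)).interior_eq]
      exact interior_mono fun t ht => hIcc ⟨ht.1.le, ht.2.le⟩
    exact ((hf.subset interior_subset hf.1.interior).continuousOn isOpen_interior).mono hsub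
  set C : ℝ := |f a| + |f b| + |f x| + (|fdm| + |fdp|) * h with hC
  have hbound : ∀ t ∈ Ioo a b, |f t| ≤ C := by
    intro t ht
    have htI : t ∈ I := hIcc ⟨ht.1.le, ht.2.le⟩
    -- upper bound
    have hup : f t ≤ max (f a) (f b) := by
      refine hf.le_max_of_mem_segment ha hb ?_
      rw [segment_eq_Icc hab.le]
      exact ⟨ht.1.le, ht.2.le⟩
    -- lower bound
    have hlo : f x - (|fdm| + |fdp|) * h ≤ f t := by
      rcases le_or_gt t x with hc | hc
      · rcases eq_or_lt_of_le hc with rfl | hc'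
        · nlinarith [abs_nonneg fdm, abs_nonneg fdp]
        · have hs := hf.slope_le_of_hasDerivWithinAt_Iio htI hxI hc' hfdm'
          rw [slope_def_field] at hs
          have hxt : 0 < x - t := by linarith
          have := (div_le_iff₀ hxt).mp hs
          have h1 : x - t ≤ h := by
            have h1' := ht.1; rw [ha_def] at h1'; linarith
          have h2 : fdm * (x - t) ≤ |fdm| * h :=
            mul_le_mul (le_abs_self fdm) h1 (by linarith) (abs_nonneg fdm)
          have h4 : (0:ℝ) ≤ |fdp| * h := by positivity
          linarith
      · have hs := hf.le_slope_of_hasDerivWithinAt_Ioi hxI htI hc hfdp'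
        rw [slope_def_field] at hs
        have htx : 0 < t - x := by linarith
        have := (le_div_iff₀ htx).mp hs
        have h1 : t - x ≤ h := by
          have h1' := ht.2; rw [hb_def] at h1'; linarith
        have h2a : -|fdp| * (t - x) ≤ fdp * (t - x) :=
          mul_le_mul_of_nonneg_right (neg_abs_le fdp) (by linarith)
        have h2b : |fdp| * (t - x) ≤ |fdp| * h :=
          mul_le_mul_of_nonneg_left h1 (abs_nonneg fdp)
        have h4 : (0:ℝ) ≤ |fdm| * h := by positivity
        nlinarith
    rw [abs_le]
    constructor
    · have := neg_abs_le (f x); linarith [abs_nonneg (f a), abs_nonneg (f b)]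
    · have h3 : max (f a) (f b) ≤ |f a| + |f b| := by
        rcases max_cases (f a) (f b) with ⟨he, _⟩ | ⟨he, _⟩ <;>
          [skip; skip] <;> rw [he] <;>
          [linarith [le_abs_self (f a), abs_nonneg (f b)];
           linarith [le_abs_self (f b), abs_nonneg (f a)]]
      have h4 : (0:ℝ) ≤ (|fdm| + |fdp|) * h := by positivity
      linarith [abs_nonneg (f x), hup]
  have hint : IntegrableOn f (Ioo a b) := by
    refine Integrable.mono' (g := fun _ => C)
      (integrable_const C) (hcont.aestronglyMeasurable measurableSet_Ioo) ?_
    rw [ae_restrict_iff' measurableSet_Ioo]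
    filter_upwards with t ht
    exact hbound t ht
  have hint_ax : IntervalIntegrable f volume a x := by
    rw [intervalIntegrable_iff_integrableOn_Ioo_of_le hax.le]
    exact hint.mono_set (Ioo_subset_Ioo le_rfl hxb.le)
  have hint_xb : IntervalIntegrable f volume x b := by
    rw [intervalIntegrable_iff_integrableOn_Ioo_of_le hxb.le]
    exact hint.mono_set (Ioo_subset_Ioo hax.le le_rfl)
  -- integral comparisons
  have haff : ∀ c d u v : ℝ, IntervalIntegrable (fun t => c + d * t) volume u v := by
    intro c d u v
    exact (continuous_const.add (continuous_const.mul continuous_id)).intervalIntegrable u v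
  have hI1 : ∫ t in a..x, f t ≤ (f a - k₁ * a) * (x - a) + k₁ * (x ^ 2 - a ^ 2) / 2 := by
    have := intervalIntegral.integral_mono_on hax.le hint_ax (haff _ (k₁) a x) P1
    rwa [integral_linear_aux] at this
  have hI2 : ∫ t in x..b, f t ≤ (f x - k₂ * x) * (b - x) + k₂ * (b ^ 2 - x ^ 2) / 2 := by
    have := intervalIntegral.integral_mono_on hxb.le hint_xb (haff _ (k₂) x b) P2
    rwa [integral_linear_aux] at this
  have hsplit : (∫ t in a..x, f t) + ∫ t in x..b, f t = ∫ t in a..b, f t :=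
    intervalIntegral.integral_add_adjacent_intervals hint_ax hint_xb
  -- final algebra
  have hval1 : (f a - k₁ * a) * (x - a) + k₁ * (x ^ 2 - a ^ 2) / 2
      = h / 4 * (f a + f x) := by
    have hx2 : x ^ 2 - a ^ 2 = (x - a) * (x + a) := by ring
    rw [hx2, hxa, hk₁, ha_def]
    field_simp
    ring
  have hval2 : (f x - k₂ * x) * (b - x) + k₂ * (b ^ 2 - x ^ 2) / 2
      = h / 4 * (f x + f b) := by
    have hb2 : b ^ 2 - x ^ 2 = (b - x) * (b + x) := by ring
    rw [hb2, hbx, hk₂, hb_def]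
    field_simp
    ring
  rw [hval1] at hI1
  rw [hval2] at hI2
  have htot : ∫ t in a..b, f t ≤ h / 4 * (f a + f x) + h / 4 * (f x + f b) := by
    rw [← hsplit]; linarith
  nlinarith [htot, mul_nonneg hh.le
    (by linarith [hfa, hfb] : (0:ℝ) ≤ f a + f b - 2 * f x - (fdp - fdm) * (h / 2))]
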